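/- Let v ≥ 1, let B ⊂ ℝ^v be a nonempty box (a product of compact intervals), and let f : B → ℝ^v be continuously differentiable. Assume that for every choice of points χ₁, …, χ_v ∈ B, the v×v matrix M whose i-th row is the gradient of the i-th component of f evaluated at χ_i (i.e., M_{ij} = ∂f_i/∂x_j(χ_i)) is invertible. Then f is injective on B, and f possesses a continuously differentiable inverse defined on the image f(B). -/

import Mathlib

open Set Function Asymptotics Filter Topology

section aux
variable {v : ℕ}

/-- The matrix of a continuous linear map on `Fin v → ℝ`. -/
lemma clm_apply_eq_mulVec (L : (Fin v → ℝ) →L[ℝ] (Fin v → ℝ)) (w : Fin v → ℝ) :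
    L w = (Matrix.of fun i j => L (Pi.single j 1) i).mulVec w := by
  have h1 : (Matrix.of fun i j => L (Pi.single j 1) i) = LinearMap.toMatrix' (L : (Fin v → ℝ) →ₗ[ℝ] (Fin v → ℝ)) := by
    ext i j
    rw [LinearMap.toMatrix'_apply]
    have hs : (Pi.single j 1 : Fin v → ℝ) = fun j' => if j' = j then 1 else 0 := by
      ext j'; simp [Pi.single_apply]
    simp only [Matrix.of_apply]
    rw [hs]
    rfl
  rw [h1, ← Matrix.toLin'_apply, Matrix.toLin'_toMatrix']
  rfl


/-- mixed-point mean value theorem on a convex set -/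
lemma mixed_mvt'' (B : Set (Fin v → ℝ)) (hconv : Convex ℝ B)
    (f : (Fin v → ℝ) → Fin v → ℝ)
    (f' : (Fin v → ℝ) → (Fin v → ℝ) →L[ℝ] (Fin v → ℝ))
    (hdiff : ∀ x ∈ B, HasFDerivWithinAt f (f' x) B x)
    {x y : Fin v → ℝ} (hx : x ∈ B) (hy : y ∈ B) :
    ∃ χ : Fin v → Fin v → ℝ, (∀ i, χ i ∈ B) ∧
      f y - f x = (Matrix.of fun i j => f' (χ i) (Pi.single j 1) i).mulVec (y - x) := by
  have key : ∀ i : Fin v, ∃ p ∈ B, f y i - f x i = f' p (y - x) i := by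
    intro i
    set h : ℝ → (Fin v → ℝ) := fun t => x + t • (y - x) with hh
    have hmaps : MapsTo h (Icc (0:ℝ) 1) B := fun t ht => hconv.add_smul_sub_mem hx hy ht
    have hder : ∀ t ∈ Icc (0:ℝ) 1,
        HasDerivWithinAt (fun t => f (h t) i) (f' (h t) (y - x) i) (Icc 0 1) t := by
      intro t ht
      have hht : HasDerivWithinAt h (y - x) (Icc (0:ℝ) 1) t := by
        have : HasDerivAt h ((1:ℝ) • (y - x)) t :=
          ((hasDerivAt_id t).smul_const (y - x)).const_add x
        simpa using this.hasDerivWithinAt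
      have := (hdiff (h t) (hmaps ht)).comp_hasDerivWithinAt t hht hmaps
      exact (hasDerivWithinAt_pi.1 this) i
    have hcontφ : ContinuousOn (fun t => f (h t) i) (Icc (0:ℝ) 1) :=
      fun t ht => (hder t ht).continuousWithinAt
    have hderiv : ∀ t ∈ Ioo (0:ℝ) 1, HasDerivAt (fun t => f (h t) i) (f' (h t) (y - x) i) t := by
      intro t ht
      exact (hder t (Ioo_subset_Icc_self ht)).hasDerivAt (Icc_mem_nhds ht.1 ht.2)
    obtain ⟨c, hc, hceq⟩ := exists_hasDerivAt_eq_slope (fun t => f (h t) i)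
      (fun t => f' (h t) (y - x) i) one_pos hcontφ hderiv
    refine ⟨h c, hmaps (Ioo_subset_Icc_self hc), ?_⟩
    rw [hceq]
    simp [hh]
  choose χ hχB hχ using key
  refine ⟨χ, hχB, ?_⟩
  funext i
  have := hχ i
  rw [clm_apply_eq_mulVec] at this
  simpa [Matrix.mulVec, dotProduct] using this

lemma isUnit_clm_of_isUnit_matrix'' (L : (Fin v → ℝ) →L[ℝ] (Fin v → ℝ))
    (h : IsUnit (Matrix.of fun i j => L (Pi.single j 1) i)) : IsUnit L := by
  obtain ⟨N, hMN, hNM⟩ := isUnit_iff_exists.1 h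
  set NL : (Fin v → ℝ) →L[ℝ] (Fin v → ℝ) :=
    LinearMap.toContinuousLinearMap (Matrix.toLin' N) with hNL
  refine isUnit_iff_exists.2 ⟨NL, ?_, ?_⟩
  · refine ContinuousLinearMap.ext fun w => ?_
    have : L (NL w) = (Matrix.of fun i j => L (Pi.single j 1) i).mulVec (N.mulVec w) := by
      rw [clm_apply_eq_mulVec]
      congr 1
    calc (L * NL) w = L (NL w) := rfl
      _ = _ := this
      _ = ((Matrix.of fun i j => L (Pi.single j 1) i) * N).mulVec w := by
          rw [Matrix.mulVec_mulVec]
      _ = w := by rw [hMN, Matrix.one_mulVec]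
      _ = (1 : (Fin v → ℝ) →L[ℝ] (Fin v → ℝ)) w := rfl
  · refine ContinuousLinearMap.ext fun w => ?_
    calc (NL * L) w = N.mulVec (L w) := by
          simp [hNL, Matrix.toLin'_apply, LinearMap.coe_toContinuousLinearMap']
      _ = N.mulVec ((Matrix.of fun i j => L (Pi.single j 1) i).mulVec w) := by
          rw [← clm_apply_eq_mulVec]
      _ = (N * (Matrix.of fun i j => L (Pi.single j 1) i)).mulVec w := by
          rw [Matrix.mulVec_mulVec]
      _ = w := by rw [hNM, Matrix.one_mulVec]
      _ = (1 : (Fin v → ℝ) →L[ℝ] (Fin v → ℝ)) w := rfl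

lemma lower_bound_exists'' (hv : 1 ≤ v) (B : Set (Fin v → ℝ))
    (hBc : IsCompact B) (hBne : B.Nonempty)
    (f' : (Fin v → ℝ) → (Fin v → ℝ) →L[ℝ] (Fin v → ℝ))
    (hcont : ContinuousOn f' B)
    (hM : ∀ χ : Fin v → (Fin v → ℝ), (∀ i, χ i ∈ B) →
      IsUnit (Matrix.of fun i j => f' (χ i) (Pi.single j 1) i)) :
    ∃ c : ℝ, 0 < c ∧ ∀ (χ : Fin v → (Fin v → ℝ)), (∀ i, χ i ∈ B) → ∀ w : Fin v → ℝ,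
      c * ‖w‖ ≤ ‖(Matrix.of fun i j => f' (χ i) (Pi.single j 1) i).mulVec w‖ := by
  haveI : Nonempty (Fin v) := ⟨⟨0, hv⟩⟩
  set S : Set ((Fin v → Fin v → ℝ) × (Fin v → ℝ)) :=
    (Set.univ.pi fun _ => B) ×ˢ Metric.sphere (0 : Fin v → ℝ) 1 with hS
  have hScomp : IsCompact S := (isCompact_univ_pi fun _ => hBc).prod (isCompact_sphere _ _)
  have hSne : S.Nonempty := by
    obtain ⟨x0, hx0⟩ := hBne
    obtain ⟨w0, hw0⟩ := (NormedSpace.sphere_nonempty (E := Fin v → ℝ) (x := 0) (r := 1)).2 zero_le_one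
    exact ⟨⟨fun _ => x0, w0⟩, ⟨fun i _ => hx0, hw0⟩⟩
  set G : ((Fin v → Fin v → ℝ) × (Fin v → ℝ)) → ℝ :=
    fun p => ‖(Matrix.of fun i j => f' (p.1 i) (Pi.single j 1) i).mulVec p.2‖ with hG
  have hGcont : ContinuousOn G S := by
    apply ContinuousOn.norm
    apply continuousOn_pi.2
    intro i
    simp only [Matrix.mulVec, dotProduct, Matrix.of_apply]
    apply continuousOn_finset_sum
    intro j _
    apply ContinuousOn.mul
    · have h1 : ContinuousOn (fun p : (Fin v → Fin v → ℝ) × (Fin v → ℝ) => f' (p.1 i)) S := by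
        apply hcont.comp (((continuous_apply i).comp continuous_fst).continuousOn)
        intro p hp
        exact hp.1 i (mem_univ i)
      exact (((continuous_apply i).comp
        (ContinuousLinearMap.apply ℝ (Fin v → ℝ) (Pi.single j 1)).continuous).comp_continuousOn h1)
    · exact ((continuous_apply j).comp continuous_snd).continuousOn
  obtain ⟨p0, hp0S, hp0min⟩ := hScomp.exists_isMinOn hSne hGcont
  have hc : 0 < G p0 := by
    rw [hG]
    apply norm_pos_iff.2
    intro hzero
    obtain ⟨N, hMN, hNM⟩ := isUnit_iff_exists.1 (hM p0.1 (fun i => hp0S.1 i (mem_univ i)))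
    have : p0.2 = 0 := by
      have := congrArg (N.mulVec) hzero
      rw [Matrix.mulVec_mulVec, hNM, Matrix.one_mulVec, Matrix.mulVec_zero] at this
      exact this
    have hw : ‖p0.2‖ = 1 := by simpa [mem_sphere_iff_norm] using hp0S.2
    rw [this] at hw; simp at hw
  refine ⟨G p0, hc, fun χ hχ w => ?_⟩
  rcases eq_or_ne w 0 with rfl | hw
  · simp
  · have hwpos : 0 < ‖w‖ := norm_pos_iff.2 hw
    set u : Fin v → ℝ := ‖w‖⁻¹ • w with hu
    have hunorm : ‖u‖ = 1 := by
      rw [hu, norm_smul, norm_inv, norm_norm, inv_mul_cancel₀ (ne_of_gt hwpos)]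
    have huS : (⟨χ, u⟩ : (Fin v → Fin v → ℝ) × (Fin v → ℝ)) ∈ S :=
      ⟨fun i _ => hχ i, by simpa [mem_sphere_iff_norm] using hunorm⟩
    have hmin := hp0min huS
    have hsm : (Matrix.of fun i j => f' (χ i) (Pi.single j 1) i).mulVec w
        = ‖w‖ • (Matrix.of fun i j => f' (χ i) (Pi.single j 1) i).mulVec u := by
      rw [hu, Matrix.mulVec_smul, smul_smul, mul_inv_cancel₀ (ne_of_gt hwpos), one_smul]
    rw [hsm, norm_smul, norm_norm, mul_comm]
    exact mul_le_mul_of_nonneg_left hmin (le_of_lt hwpos)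


end aux

/-- **Invertibility from first derivatives on a box.**
If `f` is C¹ on a nonempty box `B ⊆ ℝ^v` and every "mixed-point Jacobian"
(the matrix whose `i`-th row is the gradient of `fᵢ` at its own point `χ i ∈ B`)
is invertible, then `f` is injective on `B` and admits a C¹ inverse on `f(B)`. -/
theorem invertibility_from_first_derivatives
    (v : ℕ) (hv : 1 ≤ v) (a b : Fin v → ℝ) (hab : ∀ i, a i ≤ b i)
    (B : Set (Fin v → ℝ)) (hB : B = Set.univ.pi fun i => Set.Icc (a i) (b i))
    (f : (Fin v → ℝ) → Fin v → ℝ)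
    (f' : (Fin v → ℝ) → (Fin v → ℝ) →L[ℝ] (Fin v → ℝ))
    (hdiff : ∀ x ∈ B, HasFDerivWithinAt f (f' x) B x)
    (hcont : ContinuousOn f' B)
    (hM : ∀ χ : Fin v → (Fin v → ℝ), (∀ i, χ i ∈ B) →
      IsUnit (Matrix.of fun i j => f' (χ i) (Pi.single j 1) i)) :
    Set.InjOn f B ∧
      ∃ g : (Fin v → ℝ) → Fin v → ℝ,
        ContDiffOn ℝ 1 g (f '' B) ∧
        (∀ x ∈ B, g (f x) = x) ∧
        (∀ y ∈ f '' B, f (g y) = y) := by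
  have hBconv : Convex ℝ B := hB ▸ convex_pi (fun i _ => convex_Icc _ _)
  have hBcomp : IsCompact B := hB ▸ isCompact_univ_pi (fun i => isCompact_Icc)
  have hBne : B.Nonempty := ⟨a, by rw [hB]; exact fun i _ => ⟨le_refl _, hab i⟩⟩
  obtain ⟨c, hcpos, hc⟩ := lower_bound_exists'' hv B hBcomp hBne f' hcont hM
  -- the key lower bound
  have hlow : ∀ x ∈ B, ∀ y ∈ B, c * ‖y - x‖ ≤ ‖f y - f x‖ := by
    intro x hx y hy
    obtain ⟨χ, hχB, hχ⟩ := mixed_mvt'' B hBconv f f' hdiff hx hy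
    rw [hχ]
    exact hc χ hχB (y - x)
  have hinj : Set.InjOn f B := by
    intro x hx y hy hfe
    have := hlow x hx y hy
    rw [hfe, sub_self, norm_zero] at this
    have : ‖y - x‖ ≤ 0 := by nlinarith [norm_nonneg (y - x)]
    have : y - x = 0 := norm_le_zero_iff.1 this
    exact (sub_eq_zero.1 this).symm
  refine ⟨hinj, ?_⟩
  set s : Set (Fin v → ℝ) := f '' B with hs
  set g : (Fin v → ℝ) → (Fin v → ℝ) := Function.invFunOn f B with hg
  have hgf : ∀ x ∈ B, g (f x) = x := fun x hx => hinj.leftInvOn_invFunOn hx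
  have hfg : ∀ y ∈ s, f (g y) = y := by
    rintro y ⟨x, hx, rfl⟩
    exact Function.invFunOn_eq ⟨x, hx, rfl⟩
  have hgB : MapsTo g s B := by
    rintro y ⟨x, hx, rfl⟩
    exact Function.invFunOn_mem ⟨x, hx, rfl⟩
  -- Lipschitz bound for g
  have hglip : ∀ y1 ∈ s, ∀ y2 ∈ s, ‖g y1 - g y2‖ ≤ c⁻¹ * ‖y1 - y2‖ := by
    intro y1 hy1 y2 hy2
    have h1 := hlow (g y2) (hgB hy2) (g y1) (hgB hy1)
    rw [hfg y1 hy1, hfg y2 hy2] at h1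
    have h2 : ‖g y1 - g y2‖ ≤ ‖y1 - y2‖ / c := (le_div_iff₀' hcpos).2 h1
    rw [div_eq_inv_mul] at h2
    exact h2
  have hgcont : ContinuousOn g s := by
    intro y hy
    apply Metric.continuousWithinAt_iff.2
    intro ε hε
    refine ⟨c * ε / 2, by positivity, fun y' hy' hd => ?_⟩
    have := hglip y' hy' y hy
    rw [dist_eq_norm] at hd ⊢
    calc ‖g y' - g y‖ ≤ c⁻¹ * ‖y' - y‖ := this
      _ < c⁻¹ * (c * ε / 2) := by
          apply mul_lt_mul_of_pos_left hd (by positivity)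
      _ ≤ ε := by
          rw [mul_div_assoc, ← mul_assoc, inv_mul_cancel₀ (ne_of_gt hcpos), one_mul]
          linarith
  -- units
  have hunit : ∀ x ∈ B, IsUnit (f' x) := by
    intro x hx
    exact isUnit_clm_of_isUnit_matrix'' (f' x) (hM (fun _ => x) (fun _ => hx))
  set F : (Fin v → ℝ) → (Fin v → ℝ) →L[ℝ] (Fin v → ℝ) :=
    fun y => Ring.inverse (f' (g y)) with hF
  -- derivative of g within s
  have hgderiv : ∀ y ∈ s, HasFDerivWithinAt g (F y) s y := by
    intro y hy
    set x := g y with hx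
    have hxB : x ∈ B := hgB hy
    have hfx : f x = y := hfg y hy
    have hun : IsUnit (f' x) := hunit x hxB
    set A : (Fin v → ℝ) →L[ℝ] (Fin v → ℝ) := Ring.inverse (f' x) with hA
    have hAf : ∀ w, A (f' x w) = w := by
      intro w
      have h1 : A * f' x = 1 := Ring.inverse_mul_cancel _ hun
      calc A (f' x w) = (A * f' x) w := rfl
        _ = w := by rw [h1]; rfl
    have h1 : (fun x' => f x' - f x - f' x (x' - x)) =o[𝓝[B] x] (fun x' => x' - x) :=
      (hdiff x hxB).isLittleO
    have htend : Tendsto g (𝓝[s] y) (𝓝[B] x) :=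
      (hgcont y hy).tendsto_nhdsWithin hgB
    have h2 : ((fun x' => f x' - f x - f' x (x' - x)) ∘ g) =o[𝓝[s] y]
        ((fun x' => x' - x) ∘ g) := h1.comp_tendsto htend
    have heq : ∀ᶠ y' in 𝓝[s] y, ((fun x' => f x' - f x - f' x (x' - x)) ∘ g) y'
        = y' - y - f' x (g y' - x) := by
      filter_upwards [self_mem_nhdsWithin] with y' hy'
      simp only [Function.comp_apply, hfg y' hy', hfx]
    have h3 : (fun y' => y' - y - f' x (g y' - x)) =o[𝓝[s] y] (fun y' => g y' - x) :=
      (h2.congr' heq (Eventually.of_forall fun _ => rfl))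
    have h4 : (fun y' => g y' - x) =O[𝓝[s] y] (fun y' => y' - y) := by
      apply isBigO_iff.2 ⟨c⁻¹, ?_⟩
      filter_upwards [self_mem_nhdsWithin] with y' hy'
      have := hglip y' hy' y hy
      rw [← hx] at this
      rw [hx]
      exact this
    have h5 : (fun y' => y' - y - f' x (g y' - x)) =o[𝓝[s] y] (fun y' => y' - y) :=
      h3.trans_isBigO h4
    have h6 : (fun y' => A (y' - y - f' x (g y' - x))) =o[𝓝[s] y] (fun y' => y' - y) :=
      (A.isBigO_comp _ _).trans_isLittleO h5
    have h7 : (fun y' => g y' - g y - A (y' - y)) =o[𝓝[s] y] (fun y' => y' - y) := by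
      have key : ∀ y', -(A (y' - y - f' x (g y' - x))) = g y' - g y - A (y' - y) := by
        intro y'
        rw [map_sub, map_sub, hAf, ← hx]
        abel
      exact h6.neg_left.congr' (Eventually.of_forall key) (Eventually.of_forall fun _ => rfl)
    exact HasFDerivWithinAt.of_isLittleO h7
  -- continuity of derivative
  have hFcont : ContinuousOn F s := by
    intro y hy
    have h1 : ContinuousWithinAt (f' ∘ g) s y :=
      ContinuousWithinAt.comp (hcont (g y) (hgB hy)) (hgcont y hy) hgB
    have h2 : ContinuousAt Ring.inverse (f' (g y)) := by
      have := NormedRing.inverse_continuousAt (hunit (g y) (hgB hy)).unit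
      rwa [IsUnit.unit_spec] at this
    exact ContinuousAt.comp_continuousWithinAt (g := Ring.inverse) (f := f' ∘ g) (x := y)
      h2 h1
  refine ⟨g, ?_, hgf, hfg⟩
  intro y hy
  have h1 : (1 : WithTop ℕ∞) = 0 + 1 := by norm_num
  rw [h1, contDiffWithinAt_succ_iff_hasFDerivWithinAt (by simp)]
  refine ⟨s, ?_, ?_, F, fun y' hy' => hgderiv y' hy', ?_⟩
  · rw [insert_eq_of_mem hy]
    exact self_mem_nhdsWithin
  · intro h; simp at h
  · exact (contDiffOn_zero.mpr hFcont) y hy
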